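/- Let Q ∈ 𝕊₊ⁿ, b ∈ range(Q), S ∈ 𝕊₊ⁿ, and suppose yᵗ, x^{t−1}, xᵗ, x^{t+1} satisfy the Nesterov updates with exact subproblem solves. Then f(x^{t+1}) − f(xᵗ) ≤ ½((α_t−1)/α_{t+1})²⟨xᵗ − x^{t−1}, S(xᵗ − x^{t−1})⟩ − ½⟨x^{t+1} − xᵗ, S(x^{t+1} − xᵗ)⟩. -/

import Mathlib

open Matrix

lemma dotProduct_mulVec_symm {n : ℕ} (M : Matrix (Fin n) (Fin n) ℝ)
    (h : M.IsHermitian) (x y : Fin n → ℝ) : x ⬝ᵥ M *ᵥ y = y ⬝ᵥ M *ᵥ x := by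
  rw [dotProduct_mulVec, ← mulVec_transpose, show Mᵀ = M from (by simpa using h : M.IsSymm).eq,
    dotProduct_comm]

theorem nesterov_step_descent_inequality {n : ℕ}
    (Q S : Matrix (Fin n) (Fin n) ℝ) (b : Fin n → ℝ)
    (hQ : Q.PosSemidef) (hS : S.PosSemidef) (hb : ∃ z, Q *ᵥ z = b)
    (f : (Fin n → ℝ) → ℝ)
    (hf : ∀ x, f x = (1 / 2) * (x ⬝ᵥ Q *ᵥ x) - b ⬝ᵥ x)
    (α αnext : ℝ)
    (xprev xt xnext ynext : Fin n → ℝ)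
    (hy : ynext = xt + ((α - 1) / αnext) • (xt - xprev))
    (hopt : Q *ᵥ xnext - b + S *ᵥ (xnext - ynext) = 0) :
    f xnext - f xt
      ≤ (1 / 2) * ((α - 1) / αnext) ^ 2 * ((xt - xprev) ⬝ᵥ S *ᵥ (xt - xprev))
        - (1 / 2) * ((xnext - xt) ⬝ᵥ S *ᵥ (xnext - xt)) := by
  set c : ℝ := (α - 1) / αnext with hc
  set u : Fin n → ℝ := xnext - xt with hu
  set d : Fin n → ℝ := xt - xprev with hd
  set v : Fin n → ℝ := xnext - ynext with hv
  have hQu : 0 ≤ u ⬝ᵥ Q *ᵥ u := by have := hQ.dotProduct_mulVec_nonneg u; simpa using this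
  have hSv : 0 ≤ v ⬝ᵥ S *ᵥ v := by have := hS.dotProduct_mulVec_nonneg v; simpa using this
  -- optimality: Q xnext - b = -(S v)
  have hQb : Q *ᵥ xnext - b = -(S *ᵥ v) :=
    eq_neg_of_add_eq_zero_left hopt
  -- f xnext - f xt = u ⬝ (Q xnext - b) - ½ u Q u
  have hQsym := fun x y => dotProduct_mulVec_symm Q hQ.1 x y
  have hSsym := fun x y => dotProduct_mulVec_symm S hS.1 x y
  have hstep : f xnext - f xt = u ⬝ᵥ (Q *ᵥ xnext - b) - (1/2) * (u ⬝ᵥ Q *ᵥ u) := by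
    rw [hf, hf]
    simp only [hu, mulVec_sub, dotProduct_sub, sub_dotProduct]
    rw [hQsym xt xnext, dotProduct_comm b xnext, dotProduct_comm b xt]
    ring
  have hstep2 : u ⬝ᵥ (Q *ᵥ xnext - b) = -(u ⬝ᵥ S *ᵥ v) := by
    rw [hQb, dotProduct_neg]
  -- v = u - c • d
  have hvud : v = u - c • d := by
    rw [hv, hu, hd, hy]
    module
  -- ½ c² d S d - ½ u S u - (f xnext - f xt) = ½ u Q u + ½ v S v
  have hexp : u ⬝ᵥ S *ᵥ v = u ⬝ᵥ S *ᵥ u - c * (u ⬝ᵥ S *ᵥ d) := by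
    rw [hvud]
    simp [mulVec_sub, mulVec_smul, dotProduct_sub, dotProduct_smul, smul_eq_mul]
  have hvexp : v ⬝ᵥ S *ᵥ v
      = u ⬝ᵥ S *ᵥ u - 2 * c * (u ⬝ᵥ S *ᵥ d) + c^2 * (d ⬝ᵥ S *ᵥ d) := by
    rw [hvud]
    simp only [mulVec_sub, mulVec_smul, dotProduct_sub, sub_dotProduct,
      dotProduct_smul, smul_dotProduct, smul_eq_mul]
    rw [hSsym d u]
    ring
  rw [hstep, hstep2, hexp]
  nlinarith [hSv, hQu, hvexp]
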